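/- Let a > 0 and define angles α₀ = π/2 and α_k = arctan(a²/k) for k ∈ ℤ \ {0}. If u, v ∈ L²(ℝ) are supported in [−a, a] and |F_{α_k} v| = |F_{α_k} u| for every k ∈ ℤ, then there exists c ∈ ℂ with |c| = 1 such that v = c·u. -/

import Mathlib

open MeasureTheory

/-- The ambiguity function of `u`:
`A(u)(x,y) = ∫ u(t + x/2) conj (u(t - x/2)) e^{-2iπ t y} dt`. -/
noncomputable def amb (u : ℝ → ℂ) (x y : ℝ) : ℂ :=
  ∫ t : ℝ, u (t + x / 2) * (starRingEnd ℂ) (u (t - x / 2)) *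
    Complex.exp (-2 * (Real.pi : ℂ) * Complex.I * (t : ℂ) * (y : ℂ))

/-- The fractional Fourier transform of order `α`.  For `sin α ≠ 0` it is given by
`F_α u(ξ) = c_α e^{-iπ ξ² cot α} ∫ u(t) e^{-iπ t² cot α} e^{-2iπ t ξ / sin α} dt`
with `c_α = e^{i(α - π/2)/2} / √|sin α|`; for `α ∈ πℤ` it is `u(± ξ) = u(cos α · ξ)`. -/
noncomputable def frft (α : ℝ) (u : ℝ → ℂ) : ℝ → ℂ :=
  if Real.sin α = 0 then fun ξ => u (Real.cos α * ξ)
  else fun ξ =>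
    (Complex.exp (Complex.I * ((α : ℂ) - (Real.pi : ℂ) / 2) / 2) /
        (Real.sqrt |Real.sin α| : ℂ)) *
      Complex.exp (-(Real.pi : ℂ) * Complex.I * (ξ : ℂ) ^ 2 *
        ((Real.cos α / Real.sin α : ℝ) : ℂ)) *
      ∫ t : ℝ, u t *
        Complex.exp (-(Real.pi : ℂ) * Complex.I * (t : ℂ) ^ 2 *
          ((Real.cos α / Real.sin α : ℝ) : ℂ)) *
        Complex.exp (-2 * (Real.pi : ℂ) * Complex.I * (t : ℂ) * (ξ : ℂ) /
          ((Real.sin α : ℝ) : ℂ))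

open Complex Real Set


lemma phr_mul_int (f : ℝ → ℂ) (hf : Integrable f volume) (A B : ℝ)
    (hsupp : ∀ t, t ∉ Set.Icc A B → f t = 0) (h : ℝ → ℂ) (hh : Continuous h) :
    Integrable (fun t => f t * h t) volume := by
  obtain ⟨C, hC⟩ := (isCompact_Icc (a := A) (b := B)).exists_bound_of_continuousOn hh.continuousOn
  have heq : (fun t => f t * h t) = Set.indicator (Set.Icc A B) (fun t => f t * h t) := by
    funext t
    by_cases ht : t ∈ Set.Icc A B
    · rw [Set.indicator_of_mem ht]
    · rw [Set.indicator_of_notMem ht, hsupp t ht, zero_mul]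
  rw [heq, integrable_indicator_iff measurableSet_Icc]
  have : IntegrableOn (fun t => h t * f t) (Set.Icc A B) volume := by
    apply Integrable.bdd_mul (c := C) hf.integrableOn
      (hh.aestronglyMeasurable.restrict)
    exact (ae_restrict_iff' measurableSet_Icc).2 (Filter.Eventually.of_forall hC)
  exact this.congr (Filter.Eventually.of_forall fun t => mul_comm _ _)

lemma phr_le_zero {N C : ℝ} (hC : 0 ≤ C) (h : ∀ ε : ℝ, 0 < ε → N ≤ ε * C) : N ≤ 0 := by
  by_contra hne
  push_neg at hne
  have hlt : N / (2 * (C + 1)) * C < N := by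
    rw [div_mul_eq_mul_div, div_lt_iff₀ (by positivity)]
    nlinarith
  exact absurd (h _ (div_pos hne (by positivity))) (not_le.2 hlt)

lemma phr_core (f : ℝ → ℂ) (hf : Integrable f volume) (A B P : ℝ)
    (hP : B - A < P) (hPpos : 0 < P)
    (hsupp : ∀ t, t ∉ Set.Icc A B → f t = 0)
    (hc : ∀ m : ℤ, ∫ t : ℝ, f t *
        Complex.exp (2 * (Real.pi : ℂ) * Complex.I * (m : ℂ) * (t : ℂ) / (P : ℂ)) = 0) :
    f =ᵐ[volume] 0 := by
  haveI hPfact : Fact (0 < P) := ⟨hPpos⟩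
  -- the key claim: integral against any continuous function vanishes
  have key : ∀ g : ℝ → ℂ, Continuous g → ∫ t : ℝ, f t * g t = 0 := by
    intro g hg
    set C := ∫ t : ℝ, ‖f t‖ with hCdef
    have hC0 : 0 ≤ C := integral_nonneg fun t => norm_nonneg _
    have main : ∀ ε : ℝ, 0 < ε → ‖∫ t : ℝ, f t * g t‖ ≤ ε * C := by
      intro ε hε
      set δ := P - (B - A) with hδdef
      have hδpos : 0 < δ := by linarith
      have h3δ : (0:ℝ) < 3/δ := by positivity
      -- cutoff function
      set φ : ℝ → ℝ := fun t =>
        max 0 (min 1 (min ((t - (A - δ/3)) * (3/δ)) (((B + δ/3) - t) * (3/δ)))) with hφdef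
      have hφcont : Continuous φ := by
        apply continuous_const.max
        apply continuous_const.min
        exact (((continuous_id.sub continuous_const).mul continuous_const).min
          ((continuous_const.sub continuous_id).mul continuous_const))
      have hφ1 : ∀ t ∈ Set.Icc A B, φ t = 1 := by
        intro t ht
        have h1 : (1:ℝ) ≤ (t - (A - δ/3)) * (3/δ) := by
          calc (1:ℝ) = (δ/3) * (3/δ) := by field_simp
          _ ≤ (t - (A - δ/3)) * (3/δ) :=
              mul_le_mul_of_nonneg_right (by linarith [ht.1]) h3δ.le
        have h2 : (1:ℝ) ≤ ((B + δ/3) - t) * (3/δ) := by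
          calc (1:ℝ) = (δ/3) * (3/δ) := by field_simp
          _ ≤ ((B + δ/3) - t) * (3/δ) :=
              mul_le_mul_of_nonneg_right (by linarith [ht.2]) h3δ.le
        simp only [hφdef]
        rw [min_eq_left (le_min h1 h2), max_eq_right zero_le_one]
      have hφ0 : ∀ t : ℝ, (t ≤ A - δ/3 ∨ B + δ/3 ≤ t) → φ t = 0 := by
        intro t ht
        have hm : min ((t - (A - δ/3)) * (3/δ)) (((B + δ/3) - t) * (3/δ)) ≤ 0 := by
          rcases ht with ht | ht
          · exact le_trans (min_le_left _ _)
              (mul_nonpos_iff.2 (Or.inr ⟨by linarith, h3δ.le⟩))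
          · exact le_trans (min_le_right _ _)
              (mul_nonpos_iff.2 (Or.inr ⟨by linarith, h3δ.le⟩))
        simp only [hφdef]
        rw [max_eq_left (le_trans (min_le_right _ _) hm)]
      -- lift to the circle
      set a₀ := A - δ/2 with ha₀def
      set G0 : ℝ → ℂ := fun t => g t * (φ t : ℂ) with hG0def
      have hG0cont : Continuous G0 := hg.mul (continuous_ofReal.comp hφcont)
      have hseam : G0 a₀ = G0 (a₀ + P) := by
        have e1 : φ a₀ = 0 := hφ0 _ (Or.inl (by simp only [ha₀def]; linarith))
        have e2 : φ (a₀ + P) = 0 := hφ0 _ (Or.inr (by simp only [ha₀def, hδdef]; linarith))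
        simp only [hG0def, e1, e2, ofReal_zero, mul_zero]
      set G : AddCircle P → ℂ := AddCircle.liftIco P a₀ G0 with hGdef
      have hGcont : Continuous G := AddCircle.liftIco_continuous hseam hG0cont.continuousOn
      have hGeq : ∀ t ∈ Set.Icc A B, G (t : AddCircle P) = g t := by
        intro t ht
        have htmem : t ∈ Set.Ico a₀ (a₀ + P) := by
          constructor
          · simp only [ha₀def]; linarith [ht.1]
          · simp only [ha₀def, hδdef]; linarith [ht.2]
        rw [hGdef, AddCircle.liftIco_coe_apply htmem]
        show g t * ((φ t : ℝ) : ℂ) = g t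
        rw [hφ1 t ht, ofReal_one, mul_one]
      set Gc : C(AddCircle P, ℂ) := ⟨G, hGcont⟩ with hGcdef
      -- density of trigonometric polynomials
      have hmem : Gc ∈ closure ((Submodule.span ℂ (Set.range (@fourier P))) : Set C(AddCircle P, ℂ)) := by
        rw [← Submodule.topologicalClosure_coe, span_fourier_closure_eq_top]
        trivial
      obtain ⟨b, hbmem, hbdist⟩ := Metric.mem_closure_iff.1 hmem ε hε
      obtain ⟨cf, hcf⟩ := Finsupp.mem_span_range_iff_exists_finsupp.1 hbmem
      -- integral of f against b vanishes
      have hbint : ∫ t : ℝ, f t * b (t : AddCircle P) = 0 := by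
        rw [← hcf]
        have : ∀ t : ℝ, ((cf.sum fun i a => a • fourier i) : C(AddCircle P, ℂ)) (t : AddCircle P)
            = ∑ i ∈ cf.support, cf i * fourier i (t : AddCircle P) := by
          intro t
          rw [Finsupp.sum]
          simp [ContinuousMap.coe_sum]
        rw [integral_congr_ae (Filter.Eventually.of_forall fun t => by rw [this t])]
        have hint : ∀ i : ℤ, Integrable (fun t : ℝ => f t * (cf i * fourier i (t : AddCircle P))) volume := by
          intro i
          apply phr_mul_int f hf A B hsupp
          exact continuous_const.mul ((map_continuous (fourier i)).comp (AddCircle.continuous_mk' P))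
        calc ∫ t : ℝ, f t * ∑ i ∈ cf.support, cf i * fourier i (t : AddCircle P)
            = ∫ t : ℝ, ∑ i ∈ cf.support, f t * (cf i * fourier i (t : AddCircle P)) := by
              congr 1; funext t; rw [Finset.mul_sum]
          _ = ∑ i ∈ cf.support, ∫ t : ℝ, f t * (cf i * fourier i (t : AddCircle P)) := by
              rw [integral_finset_sum _ (fun i _ => hint i)]
          _ = 0 := by
              apply Finset.sum_eq_zero
              intro i _
              have : ∀ t : ℝ, f t * (cf i * fourier i (t : AddCircle P))
                  = cf i * (f t * Complex.exp (2 * (Real.pi : ℂ) * Complex.I * (i : ℂ) * (t : ℂ) / (P : ℂ))) := by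
                intro t
                rw [fourier_coe_apply]
                ring
              rw [integral_congr_ae (Filter.Eventually.of_forall this), integral_const_mul, hc i, mul_zero]
      -- replace g by G on the support of f
      have hfg_eq : ∫ t : ℝ, f t * g t = ∫ t : ℝ, f t * G (t : AddCircle P) := by
        apply integral_congr_ae (Filter.Eventually.of_forall ?_)
        intro t
        by_cases ht : t ∈ Set.Icc A B
        · rw [hGeq t ht]
        · rw [hsupp t ht, zero_mul, zero_mul]
      rw [hfg_eq]
      have hGbint : Integrable (fun t : ℝ => f t * (G (t : AddCircle P) - b (t : AddCircle P))) volume := by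
        apply phr_mul_int f hf A B hsupp
        exact (hGcont.comp (AddCircle.continuous_mk' P)).sub
          ((map_continuous b).comp (AddCircle.continuous_mk' P))
      have step : ∫ t : ℝ, f t * G (t : AddCircle P)
          = ∫ t : ℝ, f t * (G (t : AddCircle P) - b (t : AddCircle P)) := by
        have := integral_sub (phr_mul_int f hf A B hsupp _ (hGcont.comp (AddCircle.continuous_mk' P)))
          (phr_mul_int f hf A B hsupp _ ((map_continuous b).comp (AddCircle.continuous_mk' P)))
        calc ∫ t : ℝ, f t * G (t : AddCircle P)
            = (∫ t : ℝ, f t * G (t : AddCircle P)) - ∫ t : ℝ, f t * b (t : AddCircle P) := by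
              rw [hbint, sub_zero]
          _ = ∫ t : ℝ, (f t * G (t : AddCircle P) - f t * b (t : AddCircle P)) := (this).symm
          _ = ∫ t : ℝ, f t * (G (t : AddCircle P) - b (t : AddCircle P)) := by
              congr 1; funext t; ring
      rw [step]
      calc ‖∫ t : ℝ, f t * (G (t : AddCircle P) - b (t : AddCircle P))‖
          ≤ ∫ t : ℝ, ‖f t * (G (t : AddCircle P) - b (t : AddCircle P))‖ :=
            norm_integral_le_integral_norm _
        _ ≤ ∫ t : ℝ, ‖f t‖ * ε := by
            apply integral_mono hGbint.norm (hf.norm.mul_const ε)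
            intro t
            dsimp only
            rw [norm_mul]
            apply mul_le_mul_of_nonneg_left _ (norm_nonneg _)
            have h1 : ‖G (t : AddCircle P) - b (t : AddCircle P)‖ = dist (Gc (t : AddCircle P)) (b (t : AddCircle P)) := by
              rw [dist_eq_norm]; rfl
            rw [h1]
            exact le_of_lt (lt_of_le_of_lt (ContinuousMap.dist_apply_le_dist _) hbdist)
        _ = ε * C := by rw [integral_mul_const, hCdef, mul_comm]
    have hle : ‖∫ t : ℝ, f t * g t‖ ≤ 0 := phr_le_zero hC0 main
    exact norm_le_zero_iff.1 hle
  -- conclude via smooth test functions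
  apply ae_eq_zero_of_integral_contDiff_smul_eq_zero hf.locallyIntegrable
  intro g hgsmooth hgsupp
  have : ∫ x : ℝ, g x • f x = ∫ x : ℝ, f x * (g x : ℂ) := by
    congr 1; funext x
    rw [Complex.real_smul, mul_comm]
  rw [this]
  exact key _ (continuous_ofReal.comp hgsmooth.continuous)


noncomputable def QF (f : ℝ → ℂ) (ξ : ℝ) : ℂ :=
  ∫ t : ℝ, f t * Complex.exp (-2 * (Real.pi : ℂ) * Complex.I * (t : ℂ) * (ξ : ℂ))

noncomputable def AC (f : ℝ → ℂ) (x : ℝ) : ℂ :=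
  ∫ t : ℝ, f (t + x) * (starRingEnd ℂ) (f t)

lemma phr_exp_norm_one {z : ℂ} (hz : z.re = 0) : ‖Complex.exp z‖ = 1 := by
  rw [Complex.norm_exp, hz, Real.exp_zero]

lemma phr_re_char (x y : ℝ) : (-2 * (Real.pi : ℂ) * Complex.I * (x : ℂ) * (y : ℂ)).re = 0 := by
  simp [Complex.mul_re, Complex.mul_im]

lemma phr_integrable_conj {f : ℝ → ℂ} (hf : Integrable f volume) :
    Integrable (fun t => (starRingEnd ℂ) (f t)) volume := by
  refine Integrable.mono hf (Complex.continuous_conj.comp_aestronglyMeasurable hf.1) ?_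
  exact Filter.Eventually.of_forall fun t => by simp

lemma phr_shear_mp : MeasurePreserving (fun z : ℝ × ℝ => (z.2 + z.1, z.2))
    ((volume : Measure ℝ).prod volume) ((volume : Measure ℝ).prod volume) :=
  Measure.measurePreserving_swap.comp (measurePreserving_prod_add_swap volume volume)

lemma phr_corr_prod_integrable {f : ℝ → ℂ} (hf : Integrable f volume) :
    Integrable (fun z : ℝ × ℝ => f (z.2 + z.1) * (starRingEnd ℂ) (f z.2))
      ((volume : Measure ℝ).prod volume) := by
  have hG : Integrable (fun z : ℝ × ℝ => f z.1 * (starRingEnd ℂ) (f z.2))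
      ((volume : Measure ℝ).prod volume) := hf.mul_prod (phr_integrable_conj hf)
  have := (phr_shear_mp.integrable_comp hG.aestronglyMeasurable).2 hG
  exact this

lemma phr_corr_char_integrable {f : ℝ → ℂ} (hf : Integrable f volume) (ξ : ℝ) :
    Integrable (fun z : ℝ × ℝ => f (z.2 + z.1) * (starRingEnd ℂ) (f z.2) *
      Complex.exp (-2 * (Real.pi : ℂ) * Complex.I * (z.1 : ℂ) * (ξ : ℂ)))
      ((volume : Measure ℝ).prod volume) := by
  have hchar : AEStronglyMeasurable (fun z : ℝ × ℝ =>
      Complex.exp (-2 * (Real.pi : ℂ) * Complex.I * (z.1 : ℂ) * (ξ : ℂ)))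
      ((volume : Measure ℝ).prod volume) := by
    apply Continuous.aestronglyMeasurable
    exact Complex.continuous_exp.comp (by continuity)
  have := Integrable.bdd_mul (c := 1) (phr_corr_prod_integrable hf) hchar
    (Filter.Eventually.of_forall fun z => le_of_eq (phr_exp_norm_one (phr_re_char _ _)))
  exact this.congr (Filter.Eventually.of_forall fun z => by ring)

lemma phr_AC_integrable {f : ℝ → ℂ} (hf : Integrable f volume) :
    Integrable (AC f) volume := by
  have := (phr_corr_prod_integrable hf).integral_prod_left
  exact this

lemma phr_autocorr_fourier {f : ℝ → ℂ} (hf : Integrable f volume) (ξ : ℝ) :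
    ∫ x : ℝ, AC f x * Complex.exp (-2 * (Real.pi : ℂ) * Complex.I * (x : ℂ) * (ξ : ℂ))
      = QF f ξ * (starRingEnd ℂ) (QF f ξ) := by
  have hF := phr_corr_char_integrable hf ξ
  have swap1 : ∫ x : ℝ, AC f x * Complex.exp (-2 * (Real.pi : ℂ) * Complex.I * (x : ℂ) * (ξ : ℂ))
      = ∫ t : ℝ, ∫ x : ℝ, f (t + x) * (starRingEnd ℂ) (f t) *
          Complex.exp (-2 * (Real.pi : ℂ) * Complex.I * (x : ℂ) * (ξ : ℂ)) := by
    have e1 : ∀ x : ℝ, AC f x * Complex.exp (-2 * (Real.pi : ℂ) * Complex.I * (x : ℂ) * (ξ : ℂ))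
        = ∫ t : ℝ, f (t + x) * (starRingEnd ℂ) (f t) *
            Complex.exp (-2 * (Real.pi : ℂ) * Complex.I * (x : ℂ) * (ξ : ℂ)) := by
      intro x
      rw [AC, ← integral_mul_const]
    rw [integral_congr_ae (Filter.Eventually.of_forall e1)]
    exact integral_integral_swap (f := fun x t => f (t + x) * (starRingEnd ℂ) (f t) *
      Complex.exp (-2 * (Real.pi : ℂ) * Complex.I * (x : ℂ) * (ξ : ℂ))) hF
  rw [swap1]
  have inner : ∀ t : ℝ, ∫ x : ℝ, f (t + x) * (starRingEnd ℂ) (f t) *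
      Complex.exp (-2 * (Real.pi : ℂ) * Complex.I * (x : ℂ) * (ξ : ℂ))
      = (starRingEnd ℂ) (f t) * Complex.exp (2 * (Real.pi : ℂ) * Complex.I * (t : ℂ) * (ξ : ℂ)) * QF f ξ := by
    intro t
    have e2 : ∀ x : ℝ, f (t + x) * (starRingEnd ℂ) (f t) *
        Complex.exp (-2 * (Real.pi : ℂ) * Complex.I * (x : ℂ) * (ξ : ℂ))
        = (starRingEnd ℂ) (f t) * (f (t + x) *
            Complex.exp (-2 * (Real.pi : ℂ) * Complex.I * (x : ℂ) * (ξ : ℂ))) := fun x => by ring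
    rw [integral_congr_ae (Filter.Eventually.of_forall e2), integral_const_mul]
    have e3 : ∫ x : ℝ, f (t + x) * Complex.exp (-2 * (Real.pi : ℂ) * Complex.I * (x : ℂ) * (ξ : ℂ))
        = ∫ s : ℝ, f s * Complex.exp (-2 * (Real.pi : ℂ) * Complex.I * ((s : ℂ) - (t : ℂ)) * (ξ : ℂ)) := by
      rw [← integral_add_right_eq_self
        (fun s : ℝ => f s * Complex.exp (-2 * (Real.pi : ℂ) * Complex.I * ((s : ℂ) - (t : ℂ)) * (ξ : ℂ))) t]
      apply integral_congr_ae (Filter.Eventually.of_forall ?_)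
      intro x
      have : ((x + t : ℝ) : ℂ) - (t : ℂ) = (x : ℂ) := by push_cast; ring
      rw [add_comm t x]
      rw [this]
    rw [e3]
    have e4 : ∀ s : ℝ, f s * Complex.exp (-2 * (Real.pi : ℂ) * Complex.I * ((s : ℂ) - (t : ℂ)) * (ξ : ℂ))
        = f s * Complex.exp (-2 * (Real.pi : ℂ) * Complex.I * (s : ℂ) * (ξ : ℂ)) *
          Complex.exp (2 * (Real.pi : ℂ) * Complex.I * (t : ℂ) * (ξ : ℂ)) := by
      intro s
      have hBC : (-2 * (Real.pi : ℂ) * Complex.I * (s : ℂ) * (ξ : ℂ)) +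
          (2 * (Real.pi : ℂ) * Complex.I * (t : ℂ) * (ξ : ℂ))
          = -2 * (Real.pi : ℂ) * Complex.I * ((s : ℂ) - (t : ℂ)) * (ξ : ℂ) := by ring
      rw [← hBC, Complex.exp_add]
      ring
    rw [integral_congr_ae (Filter.Eventually.of_forall e4), integral_mul_const, QF]
    ring
  rw [integral_congr_ae (Filter.Eventually.of_forall inner)]
  have e5 : ∀ t : ℝ, (starRingEnd ℂ) (f t) *
      Complex.exp (2 * (Real.pi : ℂ) * Complex.I * (t : ℂ) * (ξ : ℂ)) * QF f ξ
      = QF f ξ * (starRingEnd ℂ) (f t * Complex.exp (-2 * (Real.pi : ℂ) * Complex.I * (t : ℂ) * (ξ : ℂ))) := by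
    intro t
    rw [map_mul, ← Complex.exp_conj]
    have : (starRingEnd ℂ) (-2 * (Real.pi : ℂ) * Complex.I * (t : ℂ) * (ξ : ℂ))
        = 2 * (Real.pi : ℂ) * Complex.I * (t : ℂ) * (ξ : ℂ) := by
      simp only [map_mul, map_neg, map_ofNat, Complex.conj_I, Complex.conj_ofReal]
      ring
    rw [this]
    ring
  rw [integral_congr_ae (Filter.Eventually.of_forall e5), integral_const_mul, integral_conj]
  rfl


noncomputable def chirp (c : ℝ) (t : ℝ) : ℂ :=
  Complex.exp (-(Real.pi : ℂ) * Complex.I * (t : ℂ) ^ 2 * (c : ℂ))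

lemma phr_re_zero (z : ℂ) (r : ℝ) (h : z = (r : ℂ) * Complex.I) : z.re = 0 := by
  subst h; simp

lemma phr_extract (α : ℝ) (hs : Real.sin α ≠ 0) (f : ℝ → ℂ) (η : ℝ) :
    ‖frft α f (η * Real.sin α)‖ =
      (Real.sqrt |Real.sin α|)⁻¹ * ‖QF (fun t => f t * chirp (Real.cos α / Real.sin α) t) η‖ := by
  rw [frft, if_neg hs]
  have hint : ∫ t : ℝ, f t *
        Complex.exp (-(Real.pi : ℂ) * Complex.I * (t : ℂ) ^ 2 *
          ((Real.cos α / Real.sin α : ℝ) : ℂ)) *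
        Complex.exp (-2 * (Real.pi : ℂ) * Complex.I * (t : ℂ) * ((η * Real.sin α : ℝ) : ℂ) /
          ((Real.sin α : ℝ) : ℂ))
      = QF (fun t => f t * chirp (Real.cos α / Real.sin α) t) η := by
    rw [QF]
    apply integral_congr_ae (Filter.Eventually.of_forall ?_)
    intro t
    rw [chirp]
    congr 1
    have hcs : ((Real.sin α : ℝ) : ℂ) ≠ 0 := Complex.ofReal_ne_zero.2 hs
    rw [Complex.ofReal_mul]
    congr 1
    rw [div_eq_iff hcs]
    ring
  rw [hint]
  rw [norm_mul, norm_mul]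
  have h1 : ‖Complex.exp (Complex.I * ((α : ℂ) - (Real.pi : ℂ) / 2) / 2) /
      (Real.sqrt |Real.sin α| : ℂ)‖ = (Real.sqrt |Real.sin α|)⁻¹ := by
    rw [norm_div]
    have : ‖Complex.exp (Complex.I * ((α : ℂ) - (Real.pi : ℂ) / 2) / 2)‖ = 1 := by
      apply phr_exp_norm_one
      apply phr_re_zero _ ((α - Real.pi / 2) / 2)
      push_cast
      ring
    rw [this]
    rw [Complex.norm_real, Real.norm_eq_abs, _root_.abs_of_nonneg (Real.sqrt_nonneg _), one_div]
  have h2 : ‖Complex.exp (-(Real.pi : ℂ) * Complex.I * ((η * Real.sin α : ℝ) : ℂ) ^ 2 *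
      ((Real.cos α / Real.sin α : ℝ) : ℂ))‖ = 1 := by
    apply phr_exp_norm_one
    apply phr_re_zero _ (-(Real.pi) * (η * Real.sin α) ^ 2 * (Real.cos α / Real.sin α))
    push_cast
    ring
  rw [h1, h2, mul_one]

lemma phr_cot_val (a : ℝ) (ha : 0 < a) (k : ℤ) (hk : k ≠ 0) :
    Real.sin (Real.arctan (a ^ 2 / (k : ℝ))) ≠ 0 ∧
    Real.cos (Real.arctan (a ^ 2 / (k : ℝ))) / Real.sin (Real.arctan (a ^ 2 / (k : ℝ)))
      = (k : ℝ) / a ^ 2 := by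
  have hk' : (k : ℝ) ≠ 0 := Int.cast_ne_zero.2 hk
  have hx : a ^ 2 / (k : ℝ) ≠ 0 := div_ne_zero (by positivity) hk'
  set x := a ^ 2 / (k : ℝ) with hxdef
  have hsin : Real.sin (Real.arctan x) = x / Real.sqrt (1 + x ^ 2) := Real.sin_arctan x
  have hcos : Real.cos (Real.arctan x) = 1 / Real.sqrt (1 + x ^ 2) := Real.cos_arctan x
  have hsq : Real.sqrt (1 + x ^ 2) ≠ 0 := by positivity
  constructor
  · rw [hsin]
    exact div_ne_zero hx hsq
  · rw [hsin, hcos]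
    have h7 : (1 / Real.sqrt (1 + x ^ 2)) / (x / Real.sqrt (1 + x ^ 2)) = 1 / x := by
      field_simp
    rw [h7, hxdef, one_div_div]

-- chunk 4
noncomputable def MD (f : ℝ → ℂ) (x y : ℝ) : ℂ :=
  ∫ t : ℝ, f (t + x) * (starRingEnd ℂ) (f t) *
    Complex.exp (-2 * (Real.pi : ℂ) * Complex.I * (t : ℂ) * (y : ℂ))

lemma phr_one_div_two_two : (1 : ENNReal) / 1 = 1 / 2 + 1 / 2 := by
  rw [ENNReal.add_halves]
  exact one_div_one

lemma phr_memL2_translate {f : ℝ → ℂ} (hf : MemLp f 2 (volume : Measure ℝ)) (x : ℝ) :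
    MemLp (fun t => f (t + x)) 2 (volume : Measure ℝ) :=
  hf.comp_measurePreserving (measurePreserving_add_right volume x)

lemma phr_memL2_conj {f : ℝ → ℂ} (hf : MemLp f 2 (volume : Measure ℝ)) :
    MemLp (fun t => (starRingEnd ℂ) (f t)) 2 (volume : Measure ℝ) := by
  apply MemLp.of_le hf (Complex.continuous_conj.comp_aestronglyMeasurable hf.1)
  exact Filter.Eventually.of_forall fun t => by simp

lemma phr_L2_mul_integrable {f g : ℝ → ℂ} (hf : MemLp f 2 (volume : Measure ℝ))
    (hg : MemLp g 2 (volume : Measure ℝ)) :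
    Integrable (fun t => f t * g t) volume := by
  have := MemLp.smul (p := 2) (q := 2) (r := 1) hg hf
  rw [memLp_one_iff_integrable] at this
  exact this.congr (Filter.Eventually.of_forall fun t => by simp [smul_eq_mul])

lemma phr_slice_integrable {f : ℝ → ℂ} (hf : MemLp f 2 (volume : Measure ℝ)) (x y : ℝ) :
    Integrable (fun t => f (t + x) * (starRingEnd ℂ) (f t) *
      Complex.exp (-2 * (Real.pi : ℂ) * Complex.I * (t : ℂ) * (y : ℂ))) volume := by
  have hbase := phr_L2_mul_integrable (phr_memL2_translate hf x) (phr_memL2_conj hf)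
  have hchar : AEStronglyMeasurable (fun t : ℝ =>
      Complex.exp (-2 * (Real.pi : ℂ) * Complex.I * (t : ℂ) * (y : ℂ))) volume :=
    (Complex.continuous_exp.comp (by continuity)).aestronglyMeasurable
  have := Integrable.bdd_mul (c := 1) hbase hchar
    (Filter.Eventually.of_forall fun t => le_of_eq (phr_exp_norm_one (phr_re_char _ _)))
  exact this.congr (Filter.Eventually.of_forall fun t => by ring)

lemma phr_conj_chirp (c t : ℝ) : (starRingEnd ℂ) (chirp c t)
    = Complex.exp ((Real.pi : ℂ) * Complex.I * (t : ℂ) ^ 2 * (c : ℂ)) := by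
  rw [chirp, ← Complex.exp_conj]
  congr 1
  simp only [map_mul, map_neg, map_pow, Complex.conj_I, Complex.conj_ofReal]
  ring

lemma phr_K_eq {f : ℝ → ℂ} (c x : ℝ) :
    AC (fun t => f t * chirp c t) x = chirp c x * MD f x (x * c) := by
  rw [AC, MD, ← integral_const_mul]
  apply integral_congr_ae (Filter.Eventually.of_forall ?_)
  intro t
  rw [map_mul, phr_conj_chirp, chirp, chirp]
  have hexp : Complex.exp (-(Real.pi : ℂ) * Complex.I * ((t + x : ℝ) : ℂ) ^ 2 * (c : ℂ)) *
      Complex.exp ((Real.pi : ℂ) * Complex.I * (t : ℂ) ^ 2 * (c : ℂ))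
      = Complex.exp (-(Real.pi : ℂ) * Complex.I * (x : ℂ) ^ 2 * (c : ℂ)) *
        Complex.exp (-2 * (Real.pi : ℂ) * Complex.I * (t : ℂ) * ((x * c : ℝ) : ℂ)) := by
    rw [← Complex.exp_add, ← Complex.exp_add]
    congr 1
    push_cast
    ring
  calc f (t + x) * Complex.exp (-(Real.pi : ℂ) * Complex.I * ((t + x : ℝ) : ℂ) ^ 2 * (c : ℂ)) *
        ((starRingEnd ℂ) (f t) * Complex.exp ((Real.pi : ℂ) * Complex.I * (t : ℂ) ^ 2 * (c : ℂ)))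
      = f (t + x) * (starRingEnd ℂ) (f t) *
        (Complex.exp (-(Real.pi : ℂ) * Complex.I * ((t + x : ℝ) : ℂ) ^ 2 * (c : ℂ)) *
          Complex.exp ((Real.pi : ℂ) * Complex.I * (t : ℂ) ^ 2 * (c : ℂ))) := by ring
    _ = Complex.exp (-(Real.pi : ℂ) * Complex.I * (x : ℂ) ^ 2 * (c : ℂ)) *
        (f (t + x) * (starRingEnd ℂ) (f t) *
          Complex.exp (-2 * (Real.pi : ℂ) * Complex.I * (t : ℂ) * ((x * c : ℝ) : ℂ))) := by
        rw [hexp]; ring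

lemma phr_chirp_int {f : ℝ → ℂ} (hf : Integrable f volume) (c : ℝ) :
    Integrable (fun t => f t * chirp c t) volume := by
  have hchar : AEStronglyMeasurable (fun t : ℝ => chirp c t) volume := by
    apply Continuous.aestronglyMeasurable
    exact Complex.continuous_exp.comp (by continuity)
  have hb : ∀ t : ℝ, ‖chirp c t‖ ≤ 1 := by
    intro t
    apply le_of_eq
    apply phr_exp_norm_one
    apply phr_re_zero _ (-(Real.pi) * t ^ 2 * c)
    push_cast
    ring
  have := Integrable.bdd_mul (c := 1) hf hchar (Filter.Eventually.of_forall hb)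
  exact this.congr (Filter.Eventually.of_forall fun t => by ring)

/-- Application 1 of the core lemma: from equality of moduli of chirped Fourier transforms,
deduce a.e. equality of the chirped autocorrelations, and hence of `MD` along the line. -/
lemma phr_step1 {a : ℝ} (ha : 0 < a) {u v : ℝ → ℂ}
    (hu1 : Integrable u volume) (hv1 : Integrable v volume)
    (hsu : ∀ t : ℝ, t ∉ Set.Icc (-a) a → u t = 0)
    (hsv : ∀ t : ℝ, t ∉ Set.Icc (-a) a → v t = 0) (c : ℝ)
    (hQ : ∀ η : ℝ, ‖QF (fun t => v t * chirp c t) η‖ = ‖QF (fun t => u t * chirp c t) η‖) :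
    ∀ᵐ x ∂(volume : Measure ℝ), MD u x (x * c) = MD v x (x * c) := by
  set gu : ℝ → ℂ := fun t => u t * chirp c t with hgu
  set gv : ℝ → ℂ := fun t => v t * chirp c t with hgv
  have hgui : Integrable gu volume := phr_chirp_int hu1 c
  have hgvi : Integrable gv volume := phr_chirp_int hv1 c
  -- equality of Fourier transforms of the difference of autocorrelations
  have hAC : ∀ ξ : ℝ, ∫ x : ℝ, (AC gu x - AC gv x) *
      Complex.exp (-2 * (Real.pi : ℂ) * Complex.I * (x : ℂ) * (ξ : ℂ)) = 0 := by
    intro ξ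
    have h1 := phr_autocorr_fourier hgui ξ
    have h2 := phr_autocorr_fourier hgvi ξ
    have hchar : AEStronglyMeasurable (fun x : ℝ =>
        Complex.exp (-2 * (Real.pi : ℂ) * Complex.I * (x : ℂ) * (ξ : ℂ))) volume :=
      (Complex.continuous_exp.comp (by continuity)).aestronglyMeasurable
    have hint1 : Integrable (fun x => AC gu x *
        Complex.exp (-2 * (Real.pi : ℂ) * Complex.I * (x : ℂ) * (ξ : ℂ))) volume := by
      have := Integrable.bdd_mul (c := 1) (phr_AC_integrable hgui) hchar
        (Filter.Eventually.of_forall fun x => le_of_eq (phr_exp_norm_one (phr_re_char _ _)))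
      exact this.congr (Filter.Eventually.of_forall fun x => by ring)
    have hint2 : Integrable (fun x => AC gv x *
        Complex.exp (-2 * (Real.pi : ℂ) * Complex.I * (x : ℂ) * (ξ : ℂ))) volume := by
      have := Integrable.bdd_mul (c := 1) (phr_AC_integrable hgvi) hchar
        (Filter.Eventually.of_forall fun x => le_of_eq (phr_exp_norm_one (phr_re_char _ _)))
      exact this.congr (Filter.Eventually.of_forall fun x => by ring)
    have e : ∀ x : ℝ, (AC gu x - AC gv x) *
        Complex.exp (-2 * (Real.pi : ℂ) * Complex.I * (x : ℂ) * (ξ : ℂ))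
        = AC gu x * Complex.exp (-2 * (Real.pi : ℂ) * Complex.I * (x : ℂ) * (ξ : ℂ))
          - AC gv x * Complex.exp (-2 * (Real.pi : ℂ) * Complex.I * (x : ℂ) * (ξ : ℂ)) :=
      fun x => by ring
    rw [integral_congr_ae (Filter.Eventually.of_forall e), integral_sub hint1 hint2, h1, h2]
    have hnorm : ∀ g : ℝ → ℂ, QF g ξ * (starRingEnd ℂ) (QF g ξ) = ((‖QF g ξ‖ ^ 2 : ℝ) : ℂ) := by
      intro g
      rw [Complex.mul_conj, Complex.normSq_eq_norm_sq]
    rw [hnorm gu, hnorm gv, hQ ξ, sub_self]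
  -- support of the difference
  have hsuppD : ∀ x : ℝ, x ∉ Set.Icc (-(2*a)) (2*a) → AC gu x - AC gv x = 0 := by
    intro x hx
    have hACz : ∀ (w : ℝ → ℂ), (∀ t : ℝ, t ∉ Set.Icc (-a) a → w t = 0) →
        AC (fun t => w t * chirp c t) x = 0 := by
      intro w hw
      rw [AC]
      have : ∀ t : ℝ, (fun t => w t * chirp c t) (t + x) *
          (starRingEnd ℂ) ((fun t => w t * chirp c t) t) = 0 := by
        intro t
        by_cases ht : t ∈ Set.Icc (-a) a
        · have htx : t + x ∉ Set.Icc (-a) a := fun hmem =>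
            hx ⟨by linarith [hmem.1, ht.2], by linarith [hmem.2, ht.1]⟩
          simp only [hw (t + x) htx, zero_mul]
        · simp only [hw t ht, zero_mul, map_zero, mul_zero]
      rw [integral_congr_ae (Filter.Eventually.of_forall this), integral_zero]
    rw [hACz u hsu, hACz v hsv, sub_zero]
  -- apply the core lemma with period 5a
  have hDae : (fun x => AC gu x - AC gv x) =ᵐ[volume] 0 := by
    apply phr_core (fun x => AC gu x - AC gv x)
      ((phr_AC_integrable hgui).sub (phr_AC_integrable hgvi))
      (-(2*a)) (2*a) (5*a) (by linarith) (by linarith) hsuppD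
    intro m
    have := hAC (-(m : ℝ) / (5*a))
    have heq : ∀ x : ℝ, (AC gu x - AC gv x) *
        Complex.exp (2 * (Real.pi : ℂ) * Complex.I * (m : ℂ) * (x : ℂ) / ((5*a : ℝ) : ℂ))
        = (AC gu x - AC gv x) *
          Complex.exp (-2 * (Real.pi : ℂ) * Complex.I * (x : ℂ) * ((-(m : ℝ) / (5*a) : ℝ) : ℂ)) := by
      intro x
      congr 1
      congr 1
      push_cast
      ring
    have hzero : ∫ x : ℝ, (AC gu x - AC gv x) *
        Complex.exp (2 * (Real.pi : ℂ) * Complex.I * (m : ℂ) * (x : ℂ) / ((5*a : ℝ) : ℂ)) = 0 := by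
      rw [integral_congr_ae (Filter.Eventually.of_forall heq)]
      exact this
    simpa using hzero
  -- cancel the chirp factor
  filter_upwards [hDae] with x hx
  have hx0 : AC gu x - AC gv x = 0 := by simpa using hx
  have hx' : AC gu x = AC gv x := sub_eq_zero.1 hx0
  rw [phr_K_eq c x, phr_K_eq c x] at hx'
  exact mul_left_cancel₀ (Complex.exp_ne_zero _) hx'

-- chunk 5
lemma phr_step2 {a : ℝ} (ha : 0 < a) {u v : ℝ → ℂ}
    (hu2 : MemLp u 2 (volume : Measure ℝ)) (hv2 : MemLp v 2 (volume : Measure ℝ))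
    (hsu : ∀ t : ℝ, t ∉ Set.Icc (-a) a → u t = 0)
    (hsv : ∀ t : ℝ, t ∉ Set.Icc (-a) a → v t = 0)
    (hM : ∀ᵐ x ∂(volume : Measure ℝ), ∀ k : ℤ,
      MD u x (x * ((k : ℝ) / a ^ 2)) = MD v x (x * ((k : ℝ) / a ^ 2))) :
    ∀ᵐ x ∂(volume : Measure ℝ),
      (fun t => u (t + x) * (starRingEnd ℂ) (u t)) =ᵐ[volume]
      (fun t => v (t + x) * (starRingEnd ℂ) (v t)) := by
  have hfin : (volume : Measure ℝ) ({0, a, -a, 2*a, -(2*a)} : Set ℝ) = 0 :=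
    (Set.toFinite _).measure_zero _
  have hnm : ∀ᵐ x ∂(volume : Measure ℝ), x ∉ ({0, a, -a, 2*a, -(2*a)} : Set ℝ) :=
    measure_eq_zero_iff_ae_notMem.1 hfin
  filter_upwards [hM, hnm] with x hx hxs
  have hx0 : x ≠ 0 := fun hh => hxs (by simp [hh])
  have hxa : x ≠ a := fun hh => hxs (by simp [hh])
  have hxna : x ≠ -a := fun hh => hxs (by simp [hh])
  have hx2a : x ≠ 2*a := fun hh => hxs (by simp [hh])
  have hxn2a : x ≠ -(2*a) := fun hh => hxs (by simp [hh])
  -- reduce to vanishing of the difference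
  set w : ℝ → ℂ := fun t => u (t + x) * (starRingEnd ℂ) (u t) -
    v (t + x) * (starRingEnd ℂ) (v t) with hwdef
  suffices hw : w =ᵐ[volume] 0 by
    filter_upwards [hw] with t ht
    have : w t = 0 := ht
    rw [hwdef] at this
    exact sub_eq_zero.1 this
  have hwint : Integrable w volume :=
    (phr_L2_mul_integrable (phr_memL2_translate hu2 x) (phr_memL2_conj hu2)).sub
      (phr_L2_mul_integrable (phr_memL2_translate hv2 x) (phr_memL2_conj hv2))
  -- trivial case |x| > 2a
  rcases le_or_gt (2*a) |x| with h2a | h2a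
  · have h2a' : 2*a < |x| := lt_of_le_of_ne h2a (fun hh => by
      rcases (abs_eq (by linarith : (0:ℝ) ≤ 2*a)).1 hh.symm with h | h
      exacts [hx2a h, hxn2a h])
    apply Filter.Eventually.of_forall
    intro t
    show w t = 0
    rw [hwdef]
    by_cases ht : t ∈ Set.Icc (-a) a
    · have htx : t + x ∉ Set.Icc (-a) a := by
        intro hmem
        have hxle : |x| ≤ 2*a := by
          rcases abs_cases x with ⟨he, _⟩ | ⟨he, _⟩ <;> rw [he]
          · linarith [hmem.2, ht.1]
          · linarith [hmem.1, ht.2]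
        linarith
      simp [hsu (t + x) htx, hsv (t + x) htx]
    · simp [hsu t ht, hsv t ht]
  -- main case |x| < 2a
  · have hxabs : 0 < |x| := abs_pos.2 hx0
    have hxaabs : |x| ≠ a := by
      intro hh
      rcases abs_eq ha.le |>.1 hh with h | h
      exacts [hxa h, hxna h]
    have hBA : min a (a - x) - max (-a) (-a - x) ≤ 2*a - |x| := by
      rcases le_or_gt 0 x with hx' | hx'
      · rw [min_eq_right (by linarith), max_eq_left (by linarith), _root_.abs_of_nonneg hx']
        linarith
      · rw [min_eq_left (by linarith), max_eq_right (by linarith), _root_.abs_of_neg hx']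
        linarith
    have hsq : 0 < (a - |x|)^2 := by
      have h2 : (a - |x|) ≠ 0 := fun hh => hxaabs (by linarith [sub_eq_zero.1 hh])
      exact lt_of_le_of_ne (sq_nonneg _) (Ne.symm (pow_ne_zero 2 h2))
    have hPgt : 2*a - |x| < a^2 / |x| := by
      rw [lt_div_iff₀ hxabs]
      nlinarith
    apply phr_core w hwint (max (-a) (-a - x)) (min a (a - x)) (a^2 / |x|)
      (by linarith) (by positivity) ?_ ?_
    · -- support
      intro t ht
      rw [Set.mem_Icc, not_and_or, not_le, not_le] at ht
      rw [hwdef]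
      rcases ht with ht | ht
      · rcases lt_max_iff.1 ht with ht' | ht'
        · have htn : t ∉ Set.Icc (-a) a := fun hmem => absurd hmem.1 (not_le.2 ht')
          simp [hsu t htn, hsv t htn]
        · have htn : t + x ∉ Set.Icc (-a) a := fun hmem => by
            have := hmem.1; linarith
          simp [hsu (t + x) htn, hsv (t + x) htn]
      · rcases min_lt_iff.1 ht with ht' | ht'
        · have htn : t ∉ Set.Icc (-a) a := fun hmem => absurd hmem.2 (not_le.2 ht')
          simp [hsu t htn, hsv t htn]
        · have htn : t + x ∉ Set.Icc (-a) a := fun hmem => by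
            have := hmem.2; linarith
          simp [hsu (t + x) htn, hsv (t + x) htn]
    · -- Fourier coefficients vanish
      intro m
      have hxc : (x : ℂ) ≠ 0 := Complex.ofReal_ne_zero.2 hx0
      have hac : ((a : ℝ) : ℂ) ≠ 0 := Complex.ofReal_ne_zero.2 (ne_of_gt ha)
      rcases lt_or_gt_of_ne hx0 with hxneg | hxpos
      · -- x < 0, take k = m
        have hk := hx m
        have hsub : ∫ t : ℝ, w t * Complex.exp (2 * (Real.pi : ℂ) * Complex.I * (m : ℂ) *
            (t : ℂ) / ((a^2 / |x| : ℝ) : ℂ)) =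
            MD u x (x * ((m : ℝ) / a ^ 2)) - MD v x (x * ((m : ℝ) / a ^ 2)) := by
          rw [MD, MD, ← integral_sub (phr_slice_integrable hu2 x _) (phr_slice_integrable hv2 x _)]
          apply integral_congr_ae (Filter.Eventually.of_forall ?_)
          intro t
          rw [hwdef]
          have hchar : Complex.exp (2 * (Real.pi : ℂ) * Complex.I * (m : ℂ) *
              (t : ℂ) / ((a^2 / |x| : ℝ) : ℂ)) =
              Complex.exp (-2 * (Real.pi : ℂ) * Complex.I * (t : ℂ) *
                ((x * ((m : ℝ) / a ^ 2) : ℝ) : ℂ)) := by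
            congr 1
            rw [_root_.abs_of_neg hxneg]
            push_cast
            field_simp
          rw [hchar]
          ring
        rw [hsub, hk, sub_self]
      · -- x > 0, take k = -m
        have hk := hx (-m)
        have hsub : ∫ t : ℝ, w t * Complex.exp (2 * (Real.pi : ℂ) * Complex.I * (m : ℂ) *
            (t : ℂ) / ((a^2 / |x| : ℝ) : ℂ)) =
            MD u x (x * (((-m : ℤ) : ℝ) / a ^ 2)) - MD v x (x * (((-m : ℤ) : ℝ) / a ^ 2)) := by
          rw [MD, MD, ← integral_sub (phr_slice_integrable hu2 x _) (phr_slice_integrable hv2 x _)]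
          apply integral_congr_ae (Filter.Eventually.of_forall ?_)
          intro t
          rw [hwdef]
          have hchar : Complex.exp (2 * (Real.pi : ℂ) * Complex.I * (m : ℂ) *
              (t : ℂ) / ((a^2 / |x| : ℝ) : ℂ)) =
              Complex.exp (-2 * (Real.pi : ℂ) * Complex.I * (t : ℂ) *
                ((x * (((-m : ℤ) : ℝ) / a ^ 2) : ℝ) : ℂ)) := by
            congr 1
            rw [_root_.abs_of_pos hxpos]
            push_cast
            field_simp
          rw [hchar]
          ring
        rw [hsub, hk, sub_self]

-- chunk 6
lemma phr_conj_eq_zero {x : ℂ} : (starRingEnd ℂ) x = 0 ↔ x = 0 := by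
  rw [starRingEnd_apply, star_eq_zero]

lemma phr_lift_fst {p : ℝ → Prop} (hp : ∀ᵐ s ∂(volume : Measure ℝ), p s) :
    ∀ᵐ z ∂((volume : Measure ℝ).prod (volume : Measure ℝ)), p z.1 := by
  rw [ae_iff] at hp ⊢
  have hsub : {z : ℝ × ℝ | ¬ p z.1} ⊆ ({s : ℝ | ¬ p s} ×ˢ (Set.univ : Set ℝ)) :=
    fun z hz => ⟨hz, trivial⟩
  apply measure_mono_null hsub
  rw [Measure.prod_prod, hp, zero_mul]

lemma phr_lift_snd {p : ℝ → Prop} (hp : ∀ᵐ s ∂(volume : Measure ℝ), p s) :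
    ∀ᵐ z ∂((volume : Measure ℝ).prod (volume : Measure ℝ)), p z.2 := by
  rw [ae_iff] at hp ⊢
  have hsub : {z : ℝ × ℝ | ¬ p z.2} ⊆ (Set.univ : Set ℝ) ×ˢ {s : ℝ | ¬ p s} :=
    fun z hz => ⟨trivial, hz⟩
  apply measure_mono_null hsub
  rw [Measure.prod_prod, hp, mul_zero]

lemma phr_endgame {u v : ℝ → ℂ}
    (hu2 : MemLp u 2 (volume : Measure ℝ)) (hv2 : MemLp v 2 (volume : Measure ℝ))
    (hslice : ∀ᵐ x ∂(volume : Measure ℝ),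
      (fun t => u (t + x) * (starRingEnd ℂ) (u t)) =ᵐ[volume]
      (fun t => v (t + x) * (starRingEnd ℂ) (v t))) :
    ∃ c : ℂ, ‖c‖ = 1 ∧ v =ᵐ[volume] fun t => c * u t := by
  -- measurable representatives
  set u' := hu2.1.mk u with hu'def
  set v' := hv2.1.mk v with hv'def
  have hu'm : StronglyMeasurable u' := hu2.1.stronglyMeasurable_mk
  have hv'm : StronglyMeasurable v' := hv2.1.stronglyMeasurable_mk
  have huu' : u =ᵐ[volume] u' := hu2.1.ae_eq_mk
  have hvv' : v =ᵐ[volume] v' := hv2.1.ae_eq_mk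
  -- transfer the slice statement to the representatives
  have hslice' : ∀ᵐ x ∂(volume : Measure ℝ),
      (fun t => u' (t + x) * (starRingEnd ℂ) (u' t)) =ᵐ[volume]
      (fun t => v' (t + x) * (starRingEnd ℂ) (v' t)) := by
    filter_upwards [hslice] with x hx
    have htru : (fun t : ℝ => u (t + x)) =ᵐ[volume] (fun t => u' (t + x)) :=
      (measurePreserving_add_right volume x).quasiMeasurePreserving.ae_eq_comp huu'
    have htrv : (fun t : ℝ => v (t + x)) =ᵐ[volume] (fun t => v' (t + x)) :=
      (measurePreserving_add_right volume x).quasiMeasurePreserving.ae_eq_comp hvv'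
    have hcu : (fun t : ℝ => (starRingEnd ℂ) (u t)) =ᵐ[volume]
        (fun t => (starRingEnd ℂ) (u' t)) := huu'.fun_comp (starRingEnd ℂ)
    have hcv : (fun t : ℝ => (starRingEnd ℂ) (v t)) =ᵐ[volume]
        (fun t => (starRingEnd ℂ) (v' t)) := hvv'.fun_comp (starRingEnd ℂ)
    exact ((htru.mul hcu).symm.trans hx).trans (htrv.mul hcv)
  -- measurability
  have hmu : Measurable u' := hu'm.measurable
  have hmv : Measurable v' := hv'm.measurable
  have hFU : Measurable (fun z : ℝ × ℝ => u' (z.2 + z.1) * (starRingEnd ℂ) (u' z.2)) :=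
    ((hmu.comp (measurable_snd.add measurable_fst)).mul
      (Complex.continuous_conj.measurable.comp (hmu.comp measurable_snd)))
  have hFV : Measurable (fun z : ℝ × ℝ => v' (z.2 + z.1) * (starRingEnd ℂ) (v' z.2)) :=
    ((hmv.comp (measurable_snd.add measurable_fst)).mul
      (Complex.continuous_conj.measurable.comp (hmv.comp measurable_snd)))
  have hNmeas : MeasurableSet {z : ℝ × ℝ |
      u' (z.2 + z.1) * (starRingEnd ℂ) (u' z.2) = v' (z.2 + z.1) * (starRingEnd ℂ) (v' z.2)} :=
    measurableSet_eq_fun hFU hFV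
  -- product statement
  have hprod : ∀ᵐ z ∂((volume : Measure ℝ).prod volume),
      u' (z.2 + z.1) * (starRingEnd ℂ) (u' z.2) = v' (z.2 + z.1) * (starRingEnd ℂ) (v' z.2) := by
    rw [ae_iff]
    have : {z : ℝ × ℝ | ¬ (u' (z.2 + z.1) * (starRingEnd ℂ) (u' z.2)
        = v' (z.2 + z.1) * (starRingEnd ℂ) (v' z.2))} = {z : ℝ × ℝ |
        u' (z.2 + z.1) * (starRingEnd ℂ) (u' z.2)
        = v' (z.2 + z.1) * (starRingEnd ℂ) (v' z.2)}ᶜ := rfl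
    rw [this]
    rw [Measure.measure_prod_null hNmeas.compl]
    filter_upwards [hslice'] with x hx
    have : (Prod.mk x ⁻¹' {z : ℝ × ℝ | u' (z.2 + z.1) * (starRingEnd ℂ) (u' z.2)
        = v' (z.2 + z.1) * (starRingEnd ℂ) (v' z.2)}ᶜ)
        = {t : ℝ | ¬ (u' (t + x) * (starRingEnd ℂ) (u' t)
          = v' (t + x) * (starRingEnd ℂ) (v' t))} := rfl
    show volume _ = 0
    rw [this]
    exact ae_iff.1 hx
  -- unshear
  have hQmeas : MeasurableSet {z : ℝ × ℝ |
      u' z.1 * (starRingEnd ℂ) (u' z.2) = v' z.1 * (starRingEnd ℂ) (v' z.2)} :=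
    measurableSet_eq_fun
      ((hmu.comp measurable_fst).mul
        (Complex.continuous_conj.measurable.comp (hmu.comp measurable_snd)))
      ((hmv.comp measurable_fst).mul
        (Complex.continuous_conj.measurable.comp (hmv.comp measurable_snd)))
  have hR : ∀ᵐ z ∂((volume : Measure ℝ).prod volume),
      u' z.1 * (starRingEnd ℂ) (u' z.2) = v' z.1 * (starRingEnd ℂ) (v' z.2) := by
    rw [← phr_shear_mp.map_eq, ae_map_iff phr_shear_mp.measurable.aemeasurable hQmeas]
    exact hprod
  -- swapped version
  have hRswap : ∀ᵐ z ∂((volume : Measure ℝ).prod volume),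
      u' z.2 * (starRingEnd ℂ) (u' z.1) = v' z.2 * (starRingEnd ℂ) (v' z.1) := by
    have hQmeas' : MeasurableSet {z : ℝ × ℝ |
        u' z.2 * (starRingEnd ℂ) (u' z.1) = v' z.2 * (starRingEnd ℂ) (v' z.1)} :=
      measurableSet_eq_fun
        ((hmu.comp measurable_snd).mul
          (Complex.continuous_conj.measurable.comp (hmu.comp measurable_fst)))
        ((hmv.comp measurable_snd).mul
          (Complex.continuous_conj.measurable.comp (hmv.comp measurable_fst)))
    have hsw := Measure.measurePreserving_swap (μ := (volume : Measure ℝ)) (ν := (volume : Measure ℝ))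
    rw [← hsw.map_eq, ae_map_iff hsw.measurable.aemeasurable hQmeas']
    exact hR
  have hcols : ∀ᵐ t ∂(volume : Measure ℝ), ∀ᵐ s ∂(volume : Measure ℝ),
      u' s * (starRingEnd ℂ) (u' t) = v' s * (starRingEnd ℂ) (v' t) :=
    Measure.ae_ae_of_ae_prod hRswap
  by_cases hu0 : u' =ᵐ[volume] (fun _ => (0 : ℂ))
  · -- u ≡ 0, hence v ≡ 0
    have hv : ∀ᵐ t ∂(volume : Measure ℝ), ∀ᵐ s ∂(volume : Measure ℝ),
        v' s * (starRingEnd ℂ) (v' t) = 0 := by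
      filter_upwards [hcols] with t ht
      filter_upwards [ht, hu0] with s hs hsz
      rw [← hs, hsz, zero_mul]
    have hv'0 : v' =ᵐ[volume] (fun _ => (0 : ℂ)) := by
      by_contra hvne
      apply hvne
      filter_upwards [hv] with t htv
      by_contra hne
      apply hvne
      filter_upwards [htv] with s hs
      rcases mul_eq_zero.1 hs with h | h
      · exact h
      · exact absurd (phr_conj_eq_zero.1 h) hne
    refine ⟨1, by simp, ?_⟩
    filter_upwards [hvv', hv'0, huu', hu0] with t h1 h2 h3 h4
    rw [h1, h2, one_mul, h3, h4]
  · -- u not a.e. zero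
    have hex : ∃ t₀ : ℝ, u' t₀ ≠ 0 ∧ (∀ᵐ s ∂(volume : Measure ℝ),
        u' s * (starRingEnd ℂ) (u' t₀) = v' s * (starRingEnd ℂ) (v' t₀)) := by
      by_contra hno
      push_neg at hno
      apply hu0
      filter_upwards [hcols] with t ht
      by_contra hne
      exact hno t hne (ht.mono fun s hs => not_not.2 hs)
    obtain ⟨t₀, ht₀, hslice0⟩ := hex
    have hvt₀ : v' t₀ ≠ 0 := by
      intro hvz
      apply hu0
      filter_upwards [hslice0] with s hs
      rw [hvz, map_zero, mul_zero] at hs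
      rcases mul_eq_zero.1 hs with h | h
      · exact h
      · exact absurd (phr_conj_eq_zero.1 h) ht₀
    set c : ℂ := (starRingEnd ℂ) (u' t₀) / (starRingEnd ℂ) (v' t₀) with hcdef
    have hcv0 : (starRingEnd ℂ) (v' t₀) ≠ 0 := fun h => hvt₀ (phr_conj_eq_zero.1 h)
    have hvc : ∀ᵐ s ∂(volume : Measure ℝ), v' s = c * u' s := by
      filter_upwards [hslice0] with s hs
      rw [hcdef, div_mul_eq_mul_div, eq_div_iff hcv0]
      linear_combination -hs
    -- the constant is unimodular
    have hfinal : ∀ᵐ z ∂((volume : Measure ℝ).prod volume),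
        u' z.1 * (starRingEnd ℂ) (u' z.2) * (1 - c * (starRingEnd ℂ) c) = 0 := by
      filter_upwards [hR, phr_lift_fst hvc, phr_lift_snd hvc] with z h1 h2 h3
      have h3' : (starRingEnd ℂ) (v' z.2) = (starRingEnd ℂ) c * (starRingEnd ℂ) (u' z.2) := by
        rw [h3, map_mul]
      linear_combination h1 + (starRingEnd ℂ) (v' z.2) * h2 + (c * u' z.1) * h3'
    have hA : (volume : Measure ℝ) {t : ℝ | ¬ (u' t = 0)} ≠ 0 := by
      intro h0
      exact hu0 (ae_iff.2 h0)
    have hAA : ((volume : Measure ℝ).prod volume)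
        ({t : ℝ | ¬ (u' t = 0)} ×ˢ {t : ℝ | ¬ (u' t = 0)}) ≠ 0 := by
      rw [Measure.prod_prod]
      exact mul_ne_zero hA hA
    have hnsub : ¬ ({t : ℝ | ¬ (u' t = 0)} ×ˢ {t : ℝ | ¬ (u' t = 0)} ⊆
        {z : ℝ × ℝ | ¬ (u' z.1 * (starRingEnd ℂ) (u' z.2) * (1 - c * (starRingEnd ℂ) c) = 0)}) :=
      fun hsub => hAA (measure_mono_null hsub (ae_iff.1 hfinal))
    rw [Set.not_subset] at hnsub
    obtain ⟨z, hzA, hz⟩ := hnsub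
    rw [Set.mem_setOf_eq, not_not] at hz
    have hcc : 1 - c * (starRingEnd ℂ) c = 0 := by
      rcases mul_eq_zero.1 hz with h | h
      · rcases mul_eq_zero.1 h with h' | h'
        · exact absurd h' hzA.1
        · exact absurd (phr_conj_eq_zero.1 h') hzA.2
      · exact h
    have hnormc : ‖c‖ = 1 := by
      have h1 : c * (starRingEnd ℂ) c = 1 := by linear_combination -hcc
      have h2 : ((Complex.normSq c : ℝ) : ℂ) = 1 := by rw [← Complex.mul_conj]; exact h1
      have h3 : Complex.normSq c = 1 := by exact_mod_cast h2
      rw [← Real.sqrt_sq (norm_nonneg c), ← Complex.normSq_eq_norm_sq, h3, Real.sqrt_one]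
    refine ⟨c, hnormc, ?_⟩
    filter_upwards [hvv', huu', hvc] with t h1 h2 h3
    rw [h1, h3, h2]

-- chunk 7: final assembly
lemma phr_int_of_supp {a : ℝ} {f : ℝ → ℂ} (hf : MemLp f 2 (volume : Measure ℝ))
    (hs : ∀ t : ℝ, t ∉ Set.Icc (-a) a → f t = 0) : Integrable f volume := by
  have heq : f = Set.indicator (Set.Icc (-a) a) f := by
    funext t
    by_cases ht : t ∈ Set.Icc (-a) a
    · rw [Set.indicator_of_mem ht]
    · rw [Set.indicator_of_notMem ht, hs t ht]
  rw [heq, integrable_indicator_iff measurableSet_Icc]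
  have hrf : MemLp f 2 (volume.restrict (Set.Icc (-a) a)) := hf.restrict _
  haveI : IsFiniteMeasure (volume.restrict (Set.Icc (-a) a)) := ⟨by
    rw [Measure.restrict_apply_univ]
    exact measure_Icc_lt_top⟩
  exact memLp_one_iff_integrable.1 (hrf.mono_exponent (by norm_num))


/-- Theorem 5.1 (3): functions supported in [-a, a] are determined, up to a unimodular
constant, by the moduli of the countably many fractional Fourier transforms of orders
α₀ = π/2 and αₖ = arctan (a²/k), k ∈ ℤ \ {0}. -/
theorem phase_retrieval_countable (a : ℝ) (ha : 0 < a) (u v : ℝ → ℂ)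
    (hu2 : MeasureTheory.MemLp u 2 MeasureTheory.volume)
    (hv2 : MeasureTheory.MemLp v 2 MeasureTheory.volume)
    (hsu : ∀ t : ℝ, t ∉ Set.Icc (-a) a → u t = 0)
    (hsv : ∀ t : ℝ, t ∉ Set.Icc (-a) a → v t = 0)
    (α : ℤ → ℝ)
    (hα : α = fun k : ℤ => if k = 0 then Real.pi / 2 else Real.arctan (a ^ 2 / (k : ℝ)))
    (h : ∀ k : ℤ, ∀ ξ : ℝ, ‖frft (α k) v ξ‖ = ‖frft (α k) u ξ‖) :
    ∃ c : ℂ, ‖c‖ = 1 ∧ v =ᵐ[MeasureTheory.volume] fun t => c * u t := by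
  have hQ : ∀ k : ℤ, ∀ η : ℝ, ‖QF (fun t => v t * chirp ((k : ℝ) / a ^ 2) t) η‖
      = ‖QF (fun t => u t * chirp ((k : ℝ) / a ^ 2) t) η‖ := by
    intro k η
    have hsc : Real.sin (α k) ≠ 0 ∧
        Real.cos (α k) / Real.sin (α k) = (k : ℝ) / a ^ 2 := by
      by_cases hk : k = 0
      · subst hk
        rw [hα]
        norm_num [Real.sin_pi_div_two, Real.cos_pi_div_two]
      · rw [hα]
        simp only [if_neg hk]
        exact phr_cot_val a ha k hk
    have h1 := phr_extract (α k) hsc.1 u η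
    have h2 := phr_extract (α k) hsc.1 v η
    rw [hsc.2] at h1 h2
    have h3 := h k (η * Real.sin (α k))
    rw [h1, h2] at h3
    have hpos : (Real.sqrt |Real.sin (α k)|)⁻¹ ≠ 0 :=
      inv_ne_zero (ne_of_gt (Real.sqrt_pos.2 (abs_pos.2 hsc.1)))
    exact mul_left_cancel₀ hpos h3
  have hu1 : Integrable u volume := phr_int_of_supp hu2 hsu
  have hv1 : Integrable v volume := phr_int_of_supp hv2 hsv
  have hM : ∀ᵐ x ∂(volume : Measure ℝ), ∀ k : ℤ,
      MD u x (x * ((k : ℝ) / a ^ 2)) = MD v x (x * ((k : ℝ) / a ^ 2)) := by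
    rw [ae_all_iff]
    intro k
    exact phr_step1 ha hu1 hv1 hsu hsv ((k : ℝ) / a ^ 2) (hQ k)
  exact phr_endgame hu2 hv2 (phr_step2 ha hu2 hv2 hsu hsv hM)
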